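/- (Chvátal–Thomassen, upper bound) For every positive integer d, every 2-edge connected graph of diameter d admits a strong orientation whose diameter is at most 2d² + 2d. -/

import Mathlib

/-- There is a directed walk of length at most `n` from `u` to `v` along the relation `D`. -/
def DiPathLE {V : Type*} (D : V → V → Prop) (u v : V) (n : ℕ) : Prop :=
  ∃ m ≤ n, ∃ f : ℕ → V, f 0 = u ∧ f m = v ∧ ∀ i < m, D (f i) (f (i + 1))

/-- `O` is an orientation of `G`: every arc of `O` is an edge of `G`, and every edge of `G`
gets exactly one of the two possible directions. -/
def IsOrientation {V : Type*} (G : SimpleGraph V) (O : V → V → Prop) : Prop :=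
  (∀ u v, O u v → G.Adj u v) ∧ ∀ u v, G.Adj u v → (O u v ↔ ¬ O v u)

/-- `G` is 2-edge connected: connected and without bridges. -/
def TwoEdgeConnected {V : Type*} (G : SimpleGraph V) : Prop :=
  G.Connected ∧ ∀ e, ¬ G.IsBridge e

/-- `G` has diameter exactly `d`. -/
def HasDiam {V : Type*} (G : SimpleGraph V) (d : ℕ) : Prop :=
  G.Connected ∧ (∀ u v, G.dist u v ≤ d) ∧ ∃ u v, G.dist u v = d

/-- `B` is a `k`-step dominating set of `G`. -/
def KStepDom {V : Type*} (G : SimpleGraph V) (B : Set V) (k : ℕ) : Prop :=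
  ∀ v, ∃ u ∈ B, ∃ w : G.Walk v u, w.length ≤ k

/-- `D` is an oriented subgraph of `G` with vertex set `S`: every arc of `D` is an
orientation of an edge of `G` with both endpoints in `S`, and no edge receives
both directions. -/
def IsOrientedSubgraph {V : Type*} (G : SimpleGraph V) (S : Set V) (D : V → V → Prop) : Prop :=
  (∀ u v, D u v → G.Adj u v ∧ u ∈ S ∧ v ∈ S) ∧ ∀ u v, ¬ (D u v ∧ D v u)

/-- The setoid identifying all the vertices of `B`. -/
def contractSetoid {V : Type*} (B : Set V) : Setoid V where
  r x y := x = y ∨ (x ∈ B ∧ y ∈ B)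
  iseqv := by
    refine ⟨fun _ => Or.inl rfl, ?_, ?_⟩
    · rintro x y (rfl | h)
      · exact Or.inl rfl
      · exact Or.inr ⟨h.2, h.1⟩
    · rintro x y z (rfl | h1) (rfl | h2)
      · exact Or.inl rfl
      · exact Or.inr h2
      · exact Or.inr h1
      · exact Or.inr ⟨h1.1, h2.2⟩

/-- The graph `G/B` obtained from `G` by contracting the set `B` to a single vertex
(removing resulting loops). -/
def contractGraph {V : Type*} (G : SimpleGraph V) (B : Set V) :
    SimpleGraph (Quotient (contractSetoid B)) where
  Adj a b := a ≠ b ∧ ∃ x y, Quotient.mk (contractSetoid B) x = a ∧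
    Quotient.mk (contractSetoid B) y = b ∧ G.Adj x y
  symm := by
    refine ⟨?_⟩
    rintro a b ⟨hne, x, y, hx, hy, hadj⟩
    exact ⟨hne.symm, y, x, hy, hx, hadj.symm⟩
  loopless := by
    refine ⟨?_⟩
    rintro a ⟨hne, -⟩
    exact hne rfl

/-- `k` is the length of a shortest cycle of `G` containing the edge `pq`. -/
def ShortestCycleThroughEdge {V : Type*} (G : SimpleGraph V) (p q : V) (k : ℕ) : Prop :=
  (∃ (a : V) (c : G.Walk a a), c.IsCycle ∧ s(p, q) ∈ c.edges ∧ c.length = k) ∧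
  ∀ (a : V) (c : G.Walk a a), c.IsCycle → s(p, q) ∈ c.edges → k ≤ c.length

/-- `G` has radius exactly `r`. -/
def HasRadius {V : Type*} (G : SimpleGraph V) (r : ℕ) : Prop :=
  G.Connected ∧ (∃ v, ∀ u, G.dist v u ≤ r) ∧ ∀ v, ∃ u, r ≤ G.dist v u



namespace CTAux

variable {V : Type*}

/-- Walk of exact length `n` along the relation `P`. -/
def FW (P : V → V → Prop) (a b : V) (n : ℕ) : Prop :=
  ∃ f : ℕ → V, f 0 = a ∧ f n = b ∧ ∀ i < n, P (f i) (f (i + 1))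

theorem fw_refl (P : V → V → Prop) (a : V) : FW P a a 0 :=
  ⟨fun _ => a, rfl, rfl, fun i hi => absurd hi (Nat.not_lt_zero i)⟩

theorem fw_mono {P Q : V → V → Prop} (h : ∀ x y, P x y → Q x y) {a b : V} {n : ℕ} :
    FW P a b n → FW Q a b n := by
  rintro ⟨f, h0, hn, hadj⟩
  exact ⟨f, h0, hn, fun i hi => h _ _ (hadj i hi)⟩

theorem fw_concat {P : V → V → Prop} {a b c : V} {n m : ℕ}
    (h1 : FW P a b n) (h2 : FW P b c m) : FW P a c (n + m) := by
  obtain ⟨f, hf0, hfn, hfadj⟩ := h1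
  obtain ⟨g, hg0, hgm, hgadj⟩ := h2
  refine ⟨fun i => if i ≤ n then f i else g (i - n), by simp [hf0], ?_, ?_⟩
  · dsimp only
    by_cases hm : m = 0
    · subst hm
      simp only [Nat.add_zero, le_refl, if_pos]
      rw [hfn, ← hg0, hgm]
    · have hle : ¬ (n + m ≤ n) := by omega
      rw [if_neg hle, ← hgm]
      congr 1
      omega
  · intro i hi
    dsimp only
    by_cases h1i : i + 1 ≤ n
    · have h0i : i ≤ n := by omega
      rw [if_pos h0i, if_pos h1i]
      exact hfadj i (by omega)
    · by_cases h0i : i ≤ n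
      · have hin : i = n := by omega
        subst hin
        rw [if_pos h0i, if_neg h1i, hfn, ← hg0]
        have : i + 1 - i = 1 := by omega
        rw [this]
        exact hgadj 0 (by omega)
      · have h1i' : ¬ (i + 1 ≤ n) := by omega
        have heq : i + 1 - n = (i - n) + 1 := by omega
        rw [if_neg h0i, if_neg h1i', heq]
        exact hgadj (i - n) (by omega)

theorem fw_reverse {P : V → V → Prop} (hsym : ∀ x y, P x y → P y x) {a b : V} {n : ℕ}
    (h : FW P a b n) : FW P b a n := by
  obtain ⟨f, h0, hn, hadj⟩ := h
  refine ⟨fun i => f (n - i), by simp [hn], by simp [h0], ?_⟩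
  intro i hi
  dsimp only
  have h1 : n - (i + 1) + 1 = n - i := by omega
  have := hadj (n - (i + 1)) (by omega)
  rw [h1] at this
  exact hsym _ _ this

/-- A segment of a walk function. -/
theorem fw_seg {P : V → V → Prop} (f : ℕ → V) {n : ℕ} (hadj : ∀ i < n, P (f i) (f (i + 1)))
    {a b : ℕ} (hab : a ≤ b) (hbn : b ≤ n) : FW P (f a) (f b) (b - a) := by
  refine ⟨fun t => f (a + t), by simp, ?_, ?_⟩
  · dsimp only
    congr 1
    omega
  · intro i hi
    dsimp only
    have : a + (i + 1) = (a + i) + 1 := by omega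
    rw [this]
    exact hadj (a + i) (by omega)

/-- Cutting out a repeated-vertex loop from a walk. -/
theorem fw_cut {P : V → V → Prop} (f : ℕ → V) {n : ℕ} (hadj : ∀ i < n, P (f i) (f (i + 1)))
    {a b : ℕ} (hab : a < b) (hbn : b ≤ n) (heq : f a = f b) :
    FW P (f 0) (f n) (n - (b - a)) := by
  refine ⟨fun t => if t < a then f t else f (t + (b - a)), ?_, ?_, ?_⟩
  · dsimp only
    by_cases h0 : 0 < a
    · rw [if_pos h0]
    · rw [if_neg h0]
      have ha : a = 0 := by omega
      subst ha
      rw [heq]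
      congr 1
      omega
  · dsimp only
    have : ¬ (n - (b - a) < a) := by omega
    rw [if_neg this]
    congr 1
    omega
  · intro i hi
    dsimp only
    by_cases h1 : i + 1 < a
    · have h2 : i < a := by omega
      rw [if_pos h2, if_pos h1]
      exact hadj i (by omega)
    · by_cases h2 : i < a
      · have h3 : i + 1 = a := by omega
        rw [if_pos h2, if_neg h1]
        have h4 : i + 1 + (b - a) = b := by omega
        rw [h4, ← heq, ← h3]
        exact hadj i (by omega)
      · rw [if_neg h2, if_neg h1]
        have h3 : i + 1 + (b - a) = (i + (b - a)) + 1 := by omega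
        rw [h3]
        exact hadj (i + (b - a)) (by omega)

end CTAux
namespace CTAux

variable {V : Type*}

/-- Minimal walk from `u` to a target set `T`: existence, minimality, interior avoids `T`,
injectivity. -/
theorem minwalk (P : V → V → Prop) (T : Set V) (u : V)
    (hex : ∃ n, ∃ b ∈ T, FW P u b n) :
    ∃ n, ∃ f : ℕ → V, f 0 = u ∧ f n ∈ T ∧ (∀ i < n, P (f i) (f (i + 1))) ∧
      (∀ m b, b ∈ T → FW P u b m → n ≤ m) ∧
      (∀ j ≤ n, f j ∈ T → j = n) ∧
      (∀ a ≤ n, ∀ b ≤ n, f a = f b → a = b) := by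
  classical
  let n := Nat.find hex
  obtain ⟨b, hbT, f, hf0, hfn, hfadj⟩ : ∃ b ∈ T, FW P u b n := Nat.find_spec hex
  have hmin : ∀ m b', b' ∈ T → FW P u b' m → n ≤ m := by
    intro m b' hb' hfw
    by_contra hlt
    exact Nat.find_min hex (by omega) ⟨b', hb', hfw⟩
  have hint : ∀ j ≤ n, f j ∈ T → j = n := by
    intro j hj hfj
    have : FW P u (f j) j := by
      have := fw_seg f hfadj (Nat.zero_le j) hj
      rwa [hf0, Nat.sub_zero] at this
    have := hmin j (f j) hfj this
    omega
  have hinj : ∀ a ≤ n, ∀ b ≤ n, f a = f b → a = b := by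
    intro a ha b hb heq
    by_contra hne
    -- wlog a < b
    rcases Nat.lt_or_ge a b with hab | hab
    · have hcut := fw_cut f hfadj hab hb heq
      rw [hf0] at hcut
      have : f n ∈ T := hfn ▸ hbT
      have := hmin _ (f n) this hcut
      omega
    · have hba : b < a := by omega
      have hcut := fw_cut f hfadj hba ha heq.symm
      rw [hf0] at hcut
      have : f n ∈ T := hfn ▸ hbT
      have := hmin _ (f n) this hcut
      omega
  exact ⟨n, f, hf0, hfn ▸ hbT, hfadj, hmin, hint, hinj⟩

theorem diPathLE_of_fw {D : V → V → Prop} {u v : V} {m n : ℕ} (h : FW D u v m) (hmn : m ≤ n) :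
    DiPathLE D u v n := by
  obtain ⟨f, h0, hm, hadj⟩ := h
  exact ⟨m, hmn, f, h0, hm, hadj⟩

theorem diPathLE_refl (D : V → V → Prop) (u : V) (n : ℕ) : DiPathLE D u u n :=
  diPathLE_of_fw (fw_refl D u) (Nat.zero_le n)

theorem diPathLE_mono {D D' : V → V → Prop} (h : ∀ a b, D a b → D' a b) {u v : V} {n n' : ℕ}
    (hn : n ≤ n') (hp : DiPathLE D u v n) : DiPathLE D' u v n' := by
  obtain ⟨m, hm, f, h0, hfm, hadj⟩ := hp
  exact ⟨m, le_trans hm hn, f, h0, hfm, fun i hi => h _ _ (hadj i hi)⟩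

theorem diPathLE_trans {D : V → V → Prop} {u v w : V} {n m : ℕ}
    (h1 : DiPathLE D u v n) (h2 : DiPathLE D v w m) : DiPathLE D u w (n + m) := by
  obtain ⟨m1, hm1, f, h0, hfm, hadj⟩ := h1
  obtain ⟨m2, hm2, g, hg0, hgm, hgadj⟩ := h2
  exact diPathLE_of_fw (fw_concat ⟨f, h0, hfm, hadj⟩ ⟨g, hg0, hgm, hgadj⟩) (by omega)

/-- A forward chain along a function. -/
theorem diPathLE_chain {D : V → V → Prop} (f : ℕ → V) {m : ℕ}
    (h : ∀ t < m, D (f t) (f (t + 1))) {a b : ℕ} (hab : a ≤ b) (hbm : b ≤ m) :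
    DiPathLE D (f a) (f b) (b - a) :=
  diPathLE_of_fw (fw_seg f h hab hbm) le_rfl

/-- A backward chain along a function with reversed arcs. -/
theorem diPathLE_revchain {D : V → V → Prop} (f : ℕ → V) {m : ℕ}
    (h : ∀ t < m, D (f (t + 1)) (f t)) {a b : ℕ} (hab : a ≤ b) (hbm : b ≤ m) :
    DiPathLE D (f b) (f a) (b - a) := by
  refine diPathLE_of_fw ⟨fun t => f (b - t), by simp, by dsimp only; congr 1; omega, ?_⟩ le_rfl
  intro i hi
  dsimp only
  have h1 : b - i = (b - (i + 1)) + 1 := by omega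
  rw [h1]
  exact h (b - (i + 1)) (by omega)

theorem diPathLE_single {D : V → V → Prop} {a b : V} (h : D a b) : DiPathLE D a b 1 :=
  diPathLE_of_fw ⟨fun i => if i = 0 then a else b, by simp, by simp, by
    intro i hi
    have : i = 0 := by omega
    subst this
    simpa using h⟩ le_rfl

end CTAux
namespace CTAux

variable {V : Type*}

theorem fw_of_walk {G : SimpleGraph V} {a b : V} (w : G.Walk a b) : FW G.Adj a b w.length :=
  ⟨w.getVert, w.getVert_zero, w.getVert_length, fun i hi => w.adj_getVert_succ hi⟩

/-- From no-bridge: there is a walk from `u` to `x` avoiding the edge `xu` (in both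
directions). -/
theorem avoid_exists {G : SimpleGraph V} (hbr : ∀ e, ¬ G.IsBridge e) {x u : V}
    (hadj : G.Adj x u) :
    ∃ n, FW (fun a c => G.Adj a c ∧ ¬(a = x ∧ c = u) ∧ ¬(a = u ∧ c = x)) u x n := by
  have h1 : ¬ G.IsBridge s(x, u) := hbr _
  rw [SimpleGraph.isBridge_iff] at h1
  push_neg at h1
  have hreach : (G \ SimpleGraph.fromEdgeSet {s(x, u)}).Reachable u x := h1.symm
  obtain ⟨w⟩ := hreach
  have := fw_of_walk w
  refine ⟨w.length, fw_mono ?_ this⟩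
  intro a c hac
  rw [SimpleGraph.sdiff_adj] at hac
  obtain ⟨hGadj, hne⟩ := hac
  rw [SimpleGraph.fromEdgeSet_adj] at hne
  refine ⟨hGadj, ?_, ?_⟩
  · rintro ⟨rfl, rfl⟩
    exact hne ⟨by simp, hGadj.ne⟩
  · rintro ⟨rfl, rfl⟩
    exact hne ⟨by rw [Sym2.eq_swap]; simp, hGadj.ne⟩

end CTAux
namespace CTAux

variable {V : Type*}

set_option maxHeartbeats 1000000 in
/-- One phase of the Chvátal–Thomassen construction: given a `K`-step dominating set `B`
and a partial orientation `D` on `S ⊇ B` satisfying the invariants, extend to `S'`, `D'`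
such that `S'` is `(K-1)`-step dominating, where each vertex of `S'` reaches `B` and is
reached from `B` within `2K` steps. -/
theorem phase_step {G : SimpleGraph V} [Fintype V]
    (hbr : ∀ e, ¬ G.IsBridge e) (K : ℕ) (hK : 1 ≤ K) (B : Set V)
    (hdom : ∀ v : V, ∃ n ≤ K, ∃ b ∈ B, FW G.Adj v b n) :
    ∀ (N : ℕ) (S : Set V) (D : V → V → Prop), Set.ncard Sᶜ ≤ N → B ⊆ S →
    (∀ a b, D a b → G.Adj a b ∧ a ∈ S ∧ b ∈ S) →
    (∀ a b, D a b → ¬ D b a) →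
    (∀ x ∈ S, ∃ b ∈ B, DiPathLE D x b (2 * K)) →
    (∀ x ∈ S, ∃ b ∈ B, DiPathLE D b x (2 * K)) →
    (∀ x ∈ S, ∀ n : ℕ, (∃ b ∈ B, FW G.Adj x b n) →
        (∃ b ∈ B, DiPathLE D x b n) ∨ (∃ b ∈ B, DiPathLE D b x n)) →
    ∃ (S' : Set V) (D' : V → V → Prop), S ⊆ S' ∧ (∀ a b, D a b → D' a b) ∧
      (∀ a b, D' a b → G.Adj a b ∧ a ∈ S' ∧ b ∈ S') ∧
      (∀ a b, D' a b → ¬ D' b a) ∧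
      (∀ x ∈ S', ∃ b ∈ B, DiPathLE D' x b (2 * K)) ∧
      (∀ x ∈ S', ∃ b ∈ B, DiPathLE D' b x (2 * K)) ∧
      (∀ v : V, ∃ n ≤ K - 1, ∃ b ∈ S', FW G.Adj v b n) := by
  classical
  intro N
  induction N with
  | zero =>
    intro S D hcard hBS h1 h2 h4a h4b h5
    have hSuniv : ∀ v, v ∈ S := by
      intro v
      by_contra hvS
      have hpos : 0 < Sᶜ.ncard := (Set.ncard_pos (Set.toFinite _)).2 ⟨v, hvS⟩
      omega
    exact ⟨S, D, subset_rfl, fun _ _ h => h, h1, h2, h4a, h4b,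
      fun v => ⟨0, Nat.zero_le _, v, hSuniv v, fw_refl _ v⟩⟩
  | succ N ih =>
    intro S D hcard hBS h1 h2 h4a h4b h5
    by_cases hdone : ∀ v : V, ∃ n ≤ K - 1, ∃ b ∈ S, FW G.Adj v b n
    · exact ⟨S, D, subset_rfl, fun _ _ h => h, h1, h2, h4a, h4b, hdone⟩
    push_neg at hdone
    obtain ⟨v, hv⟩ := hdone
    -- minimal walk from the bad vertex v to B
    obtain ⟨q, p, hp0, hpB, hpadj, hpmin, hpint, hpinj⟩ :=
      minwalk G.Adj B v (by obtain ⟨n, _, b, hb, hfw⟩ := hdom v; exact ⟨n, b, hb, hfw⟩)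
    have hqK : q = K := by
      obtain ⟨n, hn, b, hb, hfw⟩ := hdom v
      have h1q : q ≤ K := le_trans (hpmin n b hb hfw) hn
      by_contra hne
      exact hv q (by omega) (p q) (hBS hpB) ⟨p, hp0, rfl, hpadj⟩
    subst hqK
    set x := p q with hxdef
    set u₁ := p (q - 1) with hudef
    have hxB : x ∈ B := hpB
    have hadjux : G.Adj u₁ x := by
      have := hpadj (q - 1) (by omega)
      rwa [show q - 1 + 1 = q from by omega] at this
    have hu₁S : u₁ ∉ S := by
      intro hmem
      have hseg : FW G.Adj v u₁ (q - 1) := by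
        have := fw_seg p hpadj (Nat.zero_le (q - 1)) (by omega)
        rwa [hp0, Nat.sub_zero] at this
      exact hv (q - 1) le_rfl u₁ hmem hseg
    -- the edge-avoiding relation
    set P : V → V → Prop :=
      fun a c => G.Adj a c ∧ ¬(a = x ∧ c = u₁) ∧ ¬(a = u₁ ∧ c = x) with hPdef
    have hPsym : ∀ a c, P a c → P c a := by
      rintro a c ⟨ha, hb, hc⟩
      exact ⟨ha.symm, fun h => hc ⟨h.2, h.1⟩, fun h => hb ⟨h.2, h.1⟩⟩
    have hPadj : ∀ a c, P a c → G.Adj a c := fun a c h => h.1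
    have hexP : ∃ n, ∃ b ∈ B, FW P u₁ b n := by
      obtain ⟨n, hfw⟩ := avoid_exists hbr hadjux.symm
      exact ⟨n, x, hxB, hfw⟩
    obtain ⟨ρ, g, hg0, hgB, hgadj, hgmin, hgint, hginj⟩ := minwalk P B u₁ hexP
    -- the core dichotomy
    have hcore : ∀ j, j ≤ ρ → ∀ s : ℕ, (∃ b ∈ B, FW G.Adj (g j) b s) →
        (ρ ≤ j + s ∨ j + 1 ≤ s) := by
      intro j hj s hex'
      obtain ⟨m, r, hr0, hrB, hradj, hrmin, hrint, hrinj⟩ :=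
        minwalk G.Adj B (g j) (by obtain ⟨b, hb, hfw⟩ := hex'; exact ⟨s, b, hb, hfw⟩)
      have hms : m ≤ s := by obtain ⟨b, hb, hfw⟩ := hex'; exact hrmin s b hb hfw
      by_cases hcase : ∀ t, t < m → ¬((r t = x ∧ r (t + 1) = u₁) ∨ (r t = u₁ ∧ r (t + 1) = x))
      · have hrP : FW P (g j) (r m) m :=
          ⟨r, hr0, rfl, fun t ht => ⟨hradj t ht,
            fun h => hcase t ht (Or.inl h), fun h => hcase t ht (Or.inr h)⟩⟩
        have hpre : FW P u₁ (g j) j := by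
          have := fw_seg g hgadj (Nat.zero_le j) hj
          rwa [hg0, Nat.sub_zero] at this
        have := hgmin (j + m) (r m) hrB (fw_concat hpre hrP)
        left; omega
      · push_neg at hcase
        obtain ⟨t, ht, hmatch⟩ := hcase
        have hform : t + 1 = m := by
          rcases hmatch with ⟨ha, _⟩ | ⟨_, hb⟩
          · have := hrint t (by omega) (ha ▸ hxB)
            omega
          · exact hrint (t + 1) (by omega) (hb ▸ hxB)
        have hru : r t = u₁ := by
          rcases hmatch with ⟨ha, _⟩ | ⟨ha, _⟩
          · have := hrint t (by omega) (ha ▸ hxB)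
            omega
          · exact ha
        have hpreP : FW P (g j) u₁ (m - 1) := by
          refine ⟨r, hr0, by rw [show m - 1 = t from by omega]; exact hru, ?_⟩
          intro t' ht'
          refine ⟨hradj t' (by omega), ?_, ?_⟩
          · rintro ⟨ha, _⟩
            have := hrint t' (by omega) (ha ▸ hxB)
            omega
          · rintro ⟨_, hb⟩
            have := hrint (t' + 1) (by omega) (hb ▸ hxB)
            omega
        have hrev : FW P u₁ (g j) (m - 1) := fw_reverse hPsym hpreP
        have hsuf : FW P (g j) (g ρ) (ρ - j) := fw_seg g hgadj hj le_rfl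
        have := hgmin ((m - 1) + (ρ - j)) (g ρ) hgB (fw_concat hrev hsuf)
        right; omega
    have hρ2K : ρ ≤ 2 * q := by
      rcases le_or_gt ρ q with h | h
      · omega
      · obtain ⟨n, hn, b, hb, hfw⟩ := hdom (g q)
        rcases hcore q (by omega) n ⟨b, hb, hfw⟩ with h' | h' <;> omega
    -- the collision index
    have hiex : ∃ j, j ≤ ρ ∧ g j ∈ S := ⟨ρ, le_rfl, hBS hgB⟩
    set i := Nat.find hiex with hidef
    obtain ⟨hiρ, hwS⟩ : i ≤ ρ ∧ g i ∈ S := Nat.find_spec hiex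
    have fresh : ∀ j, j < i → g j ∉ S := by
      intro j hj hmem
      exact Nat.find_min hiex hj ⟨by omega, hmem⟩
    have hipos : 1 ≤ i := by
      rcases Nat.eq_zero_or_pos i with h0 | h0
      · exfalso; apply hu₁S; rw [← hg0]; rw [h0] at hwS; exact hwS
      · exact h0
    set w := g i with hwdef
    have hsuffix : FW G.Adj w (g ρ) (ρ - i) := fw_mono hPadj (fw_seg g hgadj hiρ le_rfl)
    have hxnot : ∀ j, j < i → x ≠ g j := by
      intro j hj heq
      exact fresh j hj (heq ▸ hBS hxB)
    -- common new set
    set S' : Set V := S ∪ {y | ∃ j, j < i ∧ y = g j} with hS'def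
    have hSS' : S ⊆ S' := Set.subset_union_left
    have hBS' : B ⊆ S' := subset_trans hBS hSS'
    have hcard' : Set.ncard S'ᶜ ≤ N := by
      have hss : S'ᶜ ⊂ Sᶜ := by
        constructor
        · exact Set.compl_subset_compl.2 hSS'
        · intro hsub
          have h0 : g 0 ∈ S' := Or.inr ⟨0, hipos, rfl⟩
          have h0' : g 0 ∈ Sᶜ := by rw [hg0]; exact hu₁S
          exact (hsub h0') h0
      have := Set.ncard_lt_ncard hss (Set.toFinite _)
      omega
    have hnewmem : ∀ j, j < i → g j ∈ S' := fun j hj => Or.inr ⟨j, hj, rfl⟩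
    -- the suffix walk from w to B used with the invariant
    have hdisj := h5 w hwS (ρ - i) ⟨g ρ, hgB, hsuffix⟩
    -- the chain adjacencies in G
    have hchainadj : ∀ t, t < i → G.Adj (g t) (g (t + 1)) :=
      fun t ht => hPadj _ _ (hgadj t (by omega))
    have hginj' : ∀ a ≤ ρ, ∀ b ≤ ρ, g a = g b → a = b := hginj
    -- P-avoidance of the first chain edge, used for conflict-freeness
    have hfirstP : ¬ (g 0 = u₁ ∧ g 1 = x) := by
      intro h
      exact (hgadj 0 (by omega)).2.2 h
    rcases hdisj with ⟨b₀, hb₀, hwb⟩ | ⟨b₀, hb₀, hbw⟩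
    · -- FORWARD: orient x → g 0 → ... → g i = w
      set D' : V → V → Prop := fun a c => D a c ∨ (a = x ∧ c = g 0) ∨
        (∃ j, j < i ∧ a = g j ∧ c = g (j + 1)) with hD'def
      have hDsub : ∀ a c, D a c → D' a c := fun a c h => Or.inl h
      have harcchain : ∀ t, t < i → D' (g t) (g (t + 1)) :=
        fun t ht => Or.inr (Or.inr ⟨t, ht, rfl, rfl⟩)
      have h1' : ∀ a c, D' a c → G.Adj a c ∧ a ∈ S' ∧ c ∈ S' := by
        rintro a c (h | ⟨rfl, rfl⟩ | ⟨j, hj, rfl, rfl⟩)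
        · obtain ⟨hadj, haS, hcS⟩ := h1 a c h
          exact ⟨hadj, hSS' haS, hSS' hcS⟩
        · refine ⟨by rw [hg0]; exact hadjux.symm, hSS' (hBS hxB), hnewmem 0 hipos⟩
        · refine ⟨hchainadj j hj, hnewmem j hj, ?_⟩
          rcases Nat.lt_or_ge (j + 1) i with hji | hji
          · exact hnewmem (j + 1) hji
          · have : j + 1 = i := by omega
            rw [this]; exact hSS' hwS
      have h2' : ∀ a c, D' a c → ¬ D' c a := by
        rintro a c (h | ⟨rfl, rfl⟩ | ⟨j, hj, rfl, rfl⟩) (h' | ⟨he1, he2⟩ | ⟨j', hj', he1, he2⟩)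
        · exact h2 a c h h'
        · subst he1; subst he2
          exact fresh 0 hipos (h1 _ _ h).2.1
        · subst he1; subst he2
          exact fresh j' hj' (h1 _ _ h).2.2
        · exact fresh 0 hipos (h1 _ _ h').2.1
        · -- (xarc, xarc): x = g 0 = u₁ ∈ B ⊆ S, contradiction with u₁ ∉ S
          apply hu₁S
          rw [← hg0, he1]
          exact hBS hxB
        · -- (xarc, chain): he1 : g 0 = g j', he2 : x = g (j' + 1)
          have hj'0 : (0 : ℕ) = j' := hginj 0 (by omega) j' (by omega) he1
          subst hj'0
          exact hfirstP ⟨hg0, he2.symm⟩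
        · exact fresh j hj (h1 _ _ h').2.2
        · -- (chain, xarc): he1 : g (j + 1) = x, he2 : g j = g 0
          have hj0 : j = 0 := hginj j (by omega) 0 (by omega) he2
          subst hj0
          exact hfirstP ⟨hg0, he1⟩
        · have e1 : j = j' + 1 := hginj j (by omega) (j' + 1) (by omega) he2
          have e2 : j + 1 = j' := hginj (j + 1) (by omega) j' (by omega) he1
          omega
      have h4a' : ∀ y ∈ S', ∃ b ∈ B, DiPathLE D' y b (2 * q) := by
        rintro y (hy | ⟨j, hj, rfl⟩)
        · obtain ⟨b, hb, hp⟩ := h4a y hy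
          exact ⟨b, hb, diPathLE_mono hDsub le_rfl hp⟩
        · refine ⟨b₀, hb₀, ?_⟩
          have hc1 : DiPathLE D' (g j) (g i) (i - j) :=
            diPathLE_chain g harcchain (by omega) le_rfl
          have hc2 : DiPathLE D' w b₀ (ρ - i) := diPathLE_mono hDsub le_rfl hwb
          have := diPathLE_trans hc1 hc2
          exact diPathLE_mono (fun _ _ h => h) (by omega) this
      have h4b' : ∀ y ∈ S', ∃ b ∈ B, DiPathLE D' b y (2 * q) := by
        rintro y (hy | ⟨j, hj, rfl⟩)
        · obtain ⟨b, hb, hp⟩ := h4b y hy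
          exact ⟨b, hb, diPathLE_mono hDsub le_rfl hp⟩
        · refine ⟨x, hxB, ?_⟩
          have hc1 : DiPathLE D' x (g 0) 1 := diPathLE_single (Or.inr (Or.inl ⟨rfl, rfl⟩))
          have hc2 : DiPathLE D' (g 0) (g j) j := by
            have := diPathLE_chain g harcchain (Nat.zero_le j) (by omega)
            simpa using this
          have := diPathLE_trans hc1 hc2
          exact diPathLE_mono (fun _ _ h => h) (by omega) this
      have h5' : ∀ y ∈ S', ∀ n : ℕ, (∃ b ∈ B, FW G.Adj y b n) →
          (∃ b ∈ B, DiPathLE D' y b n) ∨ (∃ b ∈ B, DiPathLE D' b y n) := by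
        rintro y (hy | ⟨j, hj, rfl⟩) n hex'
        · rcases h5 y hy n hex' with ⟨b, hb, hp⟩ | ⟨b, hb, hp⟩
          · exact Or.inl ⟨b, hb, diPathLE_mono hDsub le_rfl hp⟩
          · exact Or.inr ⟨b, hb, diPathLE_mono hDsub le_rfl hp⟩
        · rcases hcore j (by omega) n hex' with hd | hd
          · left
            refine ⟨b₀, hb₀, ?_⟩
            have hc1 : DiPathLE D' (g j) (g i) (i - j) :=
              diPathLE_chain g harcchain (by omega) le_rfl
            have hc2 : DiPathLE D' w b₀ (ρ - i) := diPathLE_mono hDsub le_rfl hwb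
            exact diPathLE_mono (fun _ _ h => h) (by omega) (diPathLE_trans hc1 hc2)
          · right
            refine ⟨x, hxB, ?_⟩
            have hc1 : DiPathLE D' x (g 0) 1 := diPathLE_single (Or.inr (Or.inl ⟨rfl, rfl⟩))
            have hc2 : DiPathLE D' (g 0) (g j) j := by
              have := diPathLE_chain g harcchain (Nat.zero_le j) (by omega)
              simpa using this
            exact diPathLE_mono (fun _ _ h => h) (by omega) (diPathLE_trans hc1 hc2)
      obtain ⟨S'', D'', hs1, hs2, hs3, hs4, hs5, hs6, hs7⟩ :=
        ih S' D' hcard' hBS' h1' h2' h4a' h4b' h5'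
      exact ⟨S'', D'', subset_trans hSS' hs1, fun a c h => hs2 a c (hDsub a c h),
        hs3, hs4, hs5, hs6, hs7⟩
    · -- BACKWARD: orient w = g i → ... → g 0 → x
      set D' : V → V → Prop := fun a c => D a c ∨ (a = g 0 ∧ c = x) ∨
        (∃ j, j < i ∧ a = g (j + 1) ∧ c = g j) with hD'def
      have hDsub : ∀ a c, D a c → D' a c := fun a c h => Or.inl h
      have harcchain : ∀ t, t < i → D' (g (t + 1)) (g t) :=
        fun t ht => Or.inr (Or.inr ⟨t, ht, rfl, rfl⟩)
      have h1' : ∀ a c, D' a c → G.Adj a c ∧ a ∈ S' ∧ c ∈ S' := by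
        rintro a c (h | ⟨rfl, rfl⟩ | ⟨j, hj, rfl, rfl⟩)
        · obtain ⟨hadj, haS, hcS⟩ := h1 a c h
          exact ⟨hadj, hSS' haS, hSS' hcS⟩
        · refine ⟨by rw [hg0]; exact hadjux, hnewmem 0 hipos, hSS' (hBS hxB)⟩
        · refine ⟨(hchainadj j hj).symm, ?_, hnewmem j hj⟩
          rcases Nat.lt_or_ge (j + 1) i with hji | hji
          · exact hnewmem (j + 1) hji
          · have : j + 1 = i := by omega
            rw [this]; exact hSS' hwS
      have h2' : ∀ a c, D' a c → ¬ D' c a := by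
        rintro a c (h | ⟨rfl, rfl⟩ | ⟨j, hj, rfl, rfl⟩) (h' | ⟨he1, he2⟩ | ⟨j', hj', he1, he2⟩)
        · exact h2 a c h h'
        · -- (D, xarc): he1 : c = g 0, he2 : a = x
          subst he1
          exact fresh 0 hipos (h1 _ _ h).2.2
        · -- (D, chain): he1 : c = g (j' + 1), he2 : a = g j'
          subst he2
          exact fresh j' hj' (h1 _ _ h).2.1
        · -- (xarc, D): a = g 0, c = x, h' : D c a
          exact fresh 0 hipos (h1 _ _ h').2.2
        · -- (xarc, xarc): he1 : x = g 0
          apply hu₁S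
          rw [← hg0, ← he1]
          exact hBS hxB
        · -- (xarc, chain): he1 : x = g (j' + 1), he2 : g 0 = g j'
          have hj'0 : (0 : ℕ) = j' := hginj 0 (by omega) j' (by omega) he2
          subst hj'0
          exact hfirstP ⟨hg0, he1.symm⟩
        · -- (chain, D): a = g (j+1), c = g j, h' : D c a
          exact fresh j hj (h1 _ _ h').2.1
        · -- (chain, xarc): he1 : g j = g 0, he2 : g (j + 1) = x
          have hj0 : j = 0 := hginj j (by omega) 0 (by omega) he1
          subst hj0
          exact hfirstP ⟨hg0, he2⟩
        ·
          have e1 : j + 1 = j' := hginj (j + 1) (by omega) j' (by omega) he2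
          have e2 : j = j' + 1 := hginj j (by omega) (j' + 1) (by omega) he1
          omega
      have h4a' : ∀ y ∈ S', ∃ b ∈ B, DiPathLE D' y b (2 * q) := by
        rintro y (hy | ⟨j, hj, rfl⟩)
        · obtain ⟨b, hb, hp⟩ := h4a y hy
          exact ⟨b, hb, diPathLE_mono hDsub le_rfl hp⟩
        · refine ⟨x, hxB, ?_⟩
          have hc1 : DiPathLE D' (g j) (g 0) j := by
            have := diPathLE_revchain g harcchain (Nat.zero_le j) (by omega : j ≤ i)
            simpa using this
          have hc2 : DiPathLE D' (g 0) x 1 := diPathLE_single (Or.inr (Or.inl ⟨rfl, rfl⟩))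
          exact diPathLE_mono (fun _ _ h => h) (by omega) (diPathLE_trans hc1 hc2)
      have h4b' : ∀ y ∈ S', ∃ b ∈ B, DiPathLE D' b y (2 * q) := by
        rintro y (hy | ⟨j, hj, rfl⟩)
        · obtain ⟨b, hb, hp⟩ := h4b y hy
          exact ⟨b, hb, diPathLE_mono hDsub le_rfl hp⟩
        · refine ⟨b₀, hb₀, ?_⟩
          have hc1 : DiPathLE D' b₀ w (ρ - i) := diPathLE_mono hDsub le_rfl hbw
          have hc2 : DiPathLE D' (g i) (g j) (i - j) :=
            diPathLE_revchain g harcchain (by omega) le_rfl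
          exact diPathLE_mono (fun _ _ h => h) (by omega) (diPathLE_trans hc1 hc2)
      have h5' : ∀ y ∈ S', ∀ n : ℕ, (∃ b ∈ B, FW G.Adj y b n) →
          (∃ b ∈ B, DiPathLE D' y b n) ∨ (∃ b ∈ B, DiPathLE D' b y n) := by
        rintro y (hy | ⟨j, hj, rfl⟩) n hex'
        · rcases h5 y hy n hex' with ⟨b, hb, hp⟩ | ⟨b, hb, hp⟩
          · exact Or.inl ⟨b, hb, diPathLE_mono hDsub le_rfl hp⟩
          · exact Or.inr ⟨b, hb, diPathLE_mono hDsub le_rfl hp⟩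
        · rcases hcore j (by omega) n hex' with hd | hd
          · right
            refine ⟨b₀, hb₀, ?_⟩
            have hc1 : DiPathLE D' b₀ w (ρ - i) := diPathLE_mono hDsub le_rfl hbw
            have hc2 : DiPathLE D' (g i) (g j) (i - j) :=
              diPathLE_revchain g harcchain (by omega) le_rfl
            exact diPathLE_mono (fun _ _ h => h) (by omega) (diPathLE_trans hc1 hc2)
          · left
            refine ⟨x, hxB, ?_⟩
            have hc1 : DiPathLE D' (g j) (g 0) j := by
              have := diPathLE_revchain g harcchain (Nat.zero_le j) (by omega : j ≤ i)
              simpa using this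
            have hc2 : DiPathLE D' (g 0) x 1 := diPathLE_single (Or.inr (Or.inl ⟨rfl, rfl⟩))
            exact diPathLE_mono (fun _ _ h => h) (by omega) (diPathLE_trans hc1 hc2)
      obtain ⟨S'', D'', hs1, hs2, hs3, hs4, hs5, hs6, hs7⟩ :=
        ih S' D' hcard' hBS' h1' h2' h4a' h4b' h5'
      exact ⟨S'', D'', subset_trans hSS' hs1, fun a c h => hs2 a c (hDsub a c h),
        hs3, hs4, hs5, hs6, hs7⟩

end CTAux

namespace CTAux

variable {V : Type*}

theorem arith_step (d c : ℕ) (h1 : 1 ≤ c) (h2 : c ≤ d) :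
    2 * c + (d * d + d - (c * c + c)) = d * d + d - ((c - 1) * (c - 1) + (c - 1)) := by
  obtain ⟨e, rfl⟩ : ∃ e, c = e + 1 := ⟨c - 1, by omega⟩
  have hexp : (e + 1) * (e + 1) = e * e + 2 * e + 1 := by ring
  have hsq : (e + 1) * (e + 1) ≤ d * d := Nat.mul_le_mul h2 h2
  simp only [Nat.add_sub_cancel]
  omega

theorem layers {G : SimpleGraph V} [Fintype V] (hbr : ∀ e, ¬ G.IsBridge e)
    (d : ℕ) (v₀ : V) (hecc : ∀ v : V, ∃ n ≤ d, FW G.Adj v v₀ n) :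
    ∀ m ≤ d, ∃ (S : Set V) (D : V → V → Prop),
      (∀ a b, D a b → G.Adj a b ∧ a ∈ S ∧ b ∈ S) ∧ (∀ a b, D a b → ¬ D b a) ∧
      (∀ v : V, ∃ n ≤ d - m, ∃ b ∈ S, FW G.Adj v b n) ∧
      (∀ x ∈ S, DiPathLE D x v₀ (d * d + d - ((d - m) * (d - m) + (d - m)))) ∧
      (∀ x ∈ S, DiPathLE D v₀ x (d * d + d - ((d - m) * (d - m) + (d - m)))) := by
  intro m
  induction m with
  | zero =>
    intro _
    refine ⟨{v₀}, fun _ _ => False, ?_, ?_, ?_, ?_, ?_⟩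
    · rintro a b ⟨⟩
    · rintro a b ⟨⟩
    · intro v
      obtain ⟨n, hn, hfw⟩ := hecc v
      exact ⟨n, by omega, v₀, rfl, hfw⟩
    · rintro x rfl
      exact diPathLE_refl _ _ _
    · rintro x rfl
      exact diPathLE_refl _ _ _
  | succ m ihm =>
    intro hm1
    obtain ⟨S, D, h1, h2, hdom, hto, hfrom⟩ := ihm (by omega)
    have hK : 1 ≤ d - m := by omega
    obtain ⟨S', D', hs1, hs2, hs3, hs4, hs5, hs6, hs7⟩ :=
      phase_step hbr (d - m) hK S hdom (Set.ncard Sᶜ) S D le_rfl subset_rfl h1 h2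
        (fun x hx => ⟨x, hx, diPathLE_refl _ _ _⟩)
        (fun x hx => ⟨x, hx, diPathLE_refl _ _ _⟩)
        (fun x hx n _ => Or.inl ⟨x, hx, diPathLE_refl _ _ _⟩)
    refine ⟨S', D', hs3, hs4, ?_, ?_, ?_⟩
    · intro v
      obtain ⟨n, hn, b, hb, hfw⟩ := hs7 v
      exact ⟨n, by omega, b, hb, hfw⟩
    · intro x hx
      obtain ⟨b, hb, hp⟩ := hs5 x hx
      have hb2 : DiPathLE D' b v₀ (d * d + d - ((d - m) * (d - m) + (d - m))) :=
        diPathLE_mono hs2 le_rfl (hto b hb)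
      have := diPathLE_trans hp hb2
      have harith := arith_step d (d - m) hK (by omega)
      rw [show d - m - 1 = d - (m + 1) from by omega] at harith
      rw [harith] at this
      exact this
    · intro x hx
      obtain ⟨b, hb, hp⟩ := hs6 x hx
      have hb2 : DiPathLE D' v₀ b (d * d + d - ((d - m) * (d - m) + (d - m))) :=
        diPathLE_mono hs2 le_rfl (hfrom b hb)
      have := diPathLE_trans hb2 hp
      have harith := arith_step d (d - m) hK (by omega)
      rw [show d - m - 1 = d - (m + 1) from by omega] at harith
      rw [Nat.add_comm] at harith
      rw [harith] at this
      exact this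

end CTAux

/-- **Chvátal–Thomassen, upper bound.** Every 2-edge connected graph of
diameter `d` admits a strong orientation of diameter at most `2d² + 2d`. -/
theorem chvatal_thomassen_diameter_upper {V : Type*} [Fintype V]
    (d : ℕ) (hd : 0 < d) (G : SimpleGraph V)
    (h2ec : TwoEdgeConnected G) (hdiam : HasDiam G d) :
    ∃ O : V → V → Prop, IsOrientation G O ∧
      ∀ u v : V, DiPathLE O u v (2 * d ^ 2 + 2 * d) := by
  classical
  open CTAux in
  obtain ⟨hconn, hbr⟩ := h2ec
  obtain ⟨-, hdist, -⟩ := hdiam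
  have hne : Nonempty V := hconn.nonempty
  obtain ⟨v₀⟩ := hne
  have hecc : ∀ v : V, ∃ n ≤ d, CTAux.FW G.Adj v v₀ n := by
    intro v
    obtain ⟨w, hw⟩ := hconn.exists_walk_length_eq_dist v v₀
    exact ⟨w.length, by rw [hw]; exact hdist v v₀, CTAux.fw_of_walk w⟩
  obtain ⟨S, D, h1, h2, hdom, hto, hfrom⟩ := CTAux.layers hbr d v₀ hecc d le_rfl
  have hSuniv : ∀ v : V, v ∈ S := by
    intro v
    obtain ⟨n, hn, b, hb, f, hf0, hfn, -⟩ := hdom v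
    have hn0 : n = 0 := by omega
    subst hn0
    rw [← hf0, hfn]
    exact hb
  have hE : d * d + d - ((d - d) * (d - d) + (d - d)) = d * d + d := by simp
  rw [hE] at hto hfrom
  let e := Fintype.equivFin V
  refine ⟨fun a b => D a b ∨ (G.Adj a b ∧ ¬ D a b ∧ ¬ D b a ∧ (e a : ℕ) < (e b : ℕ)),
    ⟨?_, ?_⟩, ?_⟩
  · rintro u v (h | ⟨h, -⟩)
    · exact (h1 u v h).1
    · exact h
  · intro u v hadj
    constructor
    · rintro (h | ⟨-, -, h, hlt⟩) (h' | ⟨-, -, h', hlt'⟩)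
      · exact h2 u v h h'
      · exact h' h
      · exact h h'
      · omega
    · intro hnO
      by_cases hDuv : D u v
      · exact Or.inl hDuv
      · by_cases hDvu : D v u
        · exact absurd (Or.inl hDvu) hnO
        · have hne' : (e u : ℕ) ≠ (e v : ℕ) := by
            intro heq
            exact hadj.ne (e.injective (Fin.ext heq))
          rcases Nat.lt_or_ge (e u : ℕ) (e v : ℕ) with hlt | hge
          · exact Or.inr ⟨hadj, hDuv, hDvu, hlt⟩
          · exact absurd (Or.inr ⟨hadj.symm, hDvu, hDuv, by omega⟩) hnO
  · intro u v
    have hu := hto u (hSuniv u)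
    have hv := hfrom v (hSuniv v)
    have hOD : ∀ a b, D a b → (D a b ∨ (G.Adj a b ∧ ¬ D a b ∧ ¬ D b a ∧ (e a : ℕ) < (e b : ℕ))) :=
      fun a b h => Or.inl h
    have htrans := CTAux.diPathLE_trans
      (CTAux.diPathLE_mono hOD le_rfl hu) (CTAux.diPathLE_mono hOD le_rfl hv)
    have : d * d + d + (d * d + d) = 2 * d ^ 2 + 2 * d := by ring
    rw [this] at htrans
    exact htrans
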